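/- In the category of partial comodules over a k-coalgebra H, a morphism f is an epimorphism if and only if the underlying linear map U(f) is surjective. Consequently, the category of partial comodules is well-copowered. -/

import Mathlib

open TensorProduct CategoryTheory

universe u

variable (k : Type u) [Field k] (H : Type u) [AddCommGroup H] [Module k H] [Coalgebra k H]

/-- A partial comodule datum over the coalgebra `H`: `(X, X•H, π, ρ)` with
`π : X ⊗ H → X•H` surjective and `ρ : X → X•H` linear. -/
structure PComod where
  X : Type u
  [addX : AddCommGroup X]
  [modX : Module k X]
  XbH : Type u
  [addXbH : AddCommGroup XbH]
  [modXbH : Module k XbH]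
  π : X ⊗[k] H →ₗ[k] XbH
  ρ : X →ₗ[k] XbH
  surj : Function.Surjective π

attribute [instance] PComod.addX PComod.modX PComod.addXbH PComod.modXbH

/-- Morphisms of partial comodule data: pairs `(f, f•H)` compatible with `π` and `ρ`.
(The component `f•H` is uniquely determined by `f`.) -/
@[ext]
structure PComodHom (A B : PComod k H) where
  f : A.X →ₗ[k] B.X
  fbH : A.XbH →ₗ[k] B.XbH
  comm1 : fbH ∘ₗ A.π = B.π ∘ₗ TensorProduct.map f LinearMap.id
  comm2 : fbH ∘ₗ A.ρ = B.ρ ∘ₗ f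

instance : Category (PComod k H) where
  Hom A B := PComodHom k H A B
  id A := ⟨LinearMap.id, LinearMap.id, by simp, by simp⟩
  comp {A B C} u v := ⟨v.f ∘ₗ u.f, v.fbH ∘ₗ u.fbH, by
      rw [LinearMap.comp_assoc, u.comm1, ← LinearMap.comp_assoc, v.comm1,
        LinearMap.comp_assoc, ← TensorProduct.map_comp]
      simp, by
      rw [LinearMap.comp_assoc, u.comm2, ← LinearMap.comp_assoc, v.comm2,
        LinearMap.comp_assoc]⟩
  id_comp u := by apply PComodHom.ext <;> simp
  comp_id u := by apply PComodHom.ext <;> simp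
  assoc u v w := by apply PComodHom.ext <;> simp [LinearMap.comp_assoc]

namespace PComodAux

set_option linter.unusedSectionVars false

variable {k : Type u} [Field k] {H : Type u} [AddCommGroup H] [Module k H] [Coalgebra k H]

@[simp] lemma comp_f {A B C : PComod k H} (u : A ⟶ B) (v : B ⟶ C) :
    (u ≫ v).f = v.f ∘ₗ u.f := rfl

@[simp] lemma comp_fbH {A B C : PComod k H} (u : A ⟶ B) (v : B ⟶ C) :
    (u ≫ v).fbH = v.fbH ∘ₗ u.fbH := rfl

@[simp] lemma id_f (A : PComod k H) : (𝟙 A : A ⟶ A).f = LinearMap.id := rfl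

@[simp] lemma id_fbH (A : PComod k H) : (𝟙 A : A ⟶ A).fbH = LinearMap.id := rfl

lemma fbH_surjective {A B : PComod k H} (u : A ⟶ B) (hf : Function.Surjective u.f) :
    Function.Surjective u.fbH := by
  intro y
  obtain ⟨t, ht⟩ := B.surj y
  obtain ⟨s, hs⟩ := TensorProduct.map_surjective (g' := (LinearMap.id : H →ₗ[k] H)) hf
    (fun y => ⟨y, rfl⟩) t
  refine ⟨A.π s, ?_⟩
  have := congrArg (fun g => g s) u.comm1
  simp only [LinearMap.coe_comp, Function.comp_apply] at this
  rw [this, hs, ht]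

lemma epi_of_surjective {A B : PComod k H} (u : A ⟶ B) (hf : Function.Surjective u.f) :
    Epi u := by
  have hbH := fbH_surjective u hf
  constructor
  intro Z v w h
  apply PComodHom.ext
  · have h1 : v.f ∘ₗ u.f = w.f ∘ₗ u.f := congrArg PComodHom.f h
    exact (LinearMap.cancel_right hf).1 h1
  · have h2 : v.fbH ∘ₗ u.fbH = w.fbH ∘ₗ u.fbH := congrArg PComodHom.fbH h
    exact (LinearMap.cancel_right hbH).1 h2

/-- Quotient of a partial comodule by a compatible pair of submodules. -/
noncomputable def quotObj (A : PComod k H) (N : Submodule k A.X) (M : Submodule k A.XbH)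
    (h1 : ∀ x ∈ N, ∀ hh : H, A.π (x ⊗ₜ hh) ∈ M)
    (h2 : ∀ x ∈ N, A.ρ x ∈ M) : PComod k H where
  X := A.X ⧸ N
  XbH := A.XbH ⧸ M
  π := TensorProduct.lift (N.liftQ (TensorProduct.curry (M.mkQ ∘ₗ A.π))
    (by
      intro x hx
      rw [LinearMap.mem_ker]
      ext hh
      simpa [Submodule.Quotient.mk_eq_zero] using h1 x hx hh))
  ρ := N.mapQ M A.ρ h2
  surj := by
    intro y
    obtain ⟨y', rfl⟩ := M.mkQ_surjective y
    obtain ⟨t, rfl⟩ := A.surj y'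
    refine ⟨TensorProduct.map N.mkQ LinearMap.id t, ?_⟩
    induction t with
    | zero => simp
    | tmul x hh => simp
    | add a b ha hb => simp_all

/-- The quotient morphism. -/
noncomputable def quotHom (A : PComod k H) (N : Submodule k A.X) (M : Submodule k A.XbH)
    (h1 : ∀ x ∈ N, ∀ hh : H, A.π (x ⊗ₜ hh) ∈ M)
    (h2 : ∀ x ∈ N, A.ρ x ∈ M) : A ⟶ quotObj A N M h1 h2 where
  f := N.mkQ
  fbH := M.mkQ
  comm1 := by
    apply TensorProduct.ext'
    intro x hh
    rfl
  comm2 := by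
    ext x
    rfl

/-- The zero morphism into a quotient object. -/
def zeroHom (A B : PComod k H) : A ⟶ B where
  f := 0
  fbH := 0
  comm2 := by simp
  comm1 := by
    apply TensorProduct.ext'
    intro x hh
    simp

/-- An isomorphism of partial comodules from a morphism with bijective components. -/
noncomputable def isoOfBijective {A B : PComod k H} (u : A ⟶ B) (hf : Function.Bijective u.f)
    (hbH : Function.Bijective u.fbH) : A ≅ B where
  hom := u
  inv :=
    { f := (LinearEquiv.ofBijective u.f hf).symm.toLinearMap
      fbH := (LinearEquiv.ofBijective u.fbH hbH).symm.toLinearMap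
      comm1 := by
        apply (LinearMap.cancel_right
          (TensorProduct.map_surjective (g' := (LinearMap.id : H →ₗ[k] H)) hf.2
            (fun y => ⟨y, rfl⟩))).1
        rw [LinearMap.comp_assoc, ← u.comm1, LinearMap.comp_assoc, ← TensorProduct.map_comp]
        apply TensorProduct.ext'
        intro x hh
        simp [LinearEquiv.symm_apply_eq, LinearEquiv.ofBijective_apply]
      comm2 := by
        apply (LinearMap.cancel_right hf.2).1
        rw [LinearMap.comp_assoc, ← u.comm2, LinearMap.comp_assoc]
        ext x
        simp [LinearEquiv.symm_apply_eq, LinearEquiv.ofBijective_apply] }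
  hom_inv_id := by
    apply PComodHom.ext <;> ext x <;>
      simp [LinearEquiv.symm_apply_eq, LinearEquiv.ofBijective_apply]
  inv_hom_id := by
    apply PComodHom.ext <;> ext x <;>
      simp [LinearEquiv.ofBijective_apply]

end PComodAux

/-- In the category of partial comodules over a coalgebra `H`, a morphism `f` is an
epimorphism iff the underlying linear map is surjective; consequently, the category
of partial comodules is well-copowered: every object has (up to isomorphism) only a
set of epimorphic quotients. -/
theorem epi_iff_surjective_and_wellCopowered :
    (∀ (A B : PComod k H) (u : A ⟶ B), Epi u ↔ Function.Surjective u.f) ∧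
    (∀ A : PComod k H, ∃ (ι : Type u) (Q : ι → PComod k H) (q : ∀ i, A ⟶ Q i),
      (∀ i, Epi (q i)) ∧
      ∀ (B : PComod k H) (u : A ⟶ B), Epi u →
        ∃ (i : ι) (e : Q i ≅ B), q i ≫ e.hom = u) := by
  have epi_iff : ∀ (A B : PComod k H) (u : A ⟶ B), Epi u ↔ Function.Surjective u.f := by
    intro A B u
    constructor
    · intro hu
      set N : Submodule k B.X := LinearMap.range u.f with hN
      set M : Submodule k B.XbH := LinearMap.range u.fbH with hM
      have h1 : ∀ x ∈ N, ∀ hh : H, B.π (x ⊗ₜ hh) ∈ M := by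
        rintro _ ⟨a, rfl⟩ hh
        refine ⟨A.π (a ⊗ₜ hh), ?_⟩
        have := congrArg (fun g => g (a ⊗ₜ[k] hh)) u.comm1
        simpa using this
      have h2 : ∀ x ∈ N, B.ρ x ∈ M := by
        rintro _ ⟨a, rfl⟩
        refine ⟨A.ρ a, ?_⟩
        have := congrArg (fun g => g a) u.comm2
        simpa using this
      have heq : u ≫ PComodAux.quotHom B N M h1 h2 =
          u ≫ PComodAux.zeroHom B (PComodAux.quotObj B N M h1 h2) := by
        apply PComodHom.ext
        · ext a
          simp only [PComodAux.comp_f, PComodAux.quotHom, PComodAux.zeroHom,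
            LinearMap.coe_comp, Function.comp_apply, LinearMap.zero_apply]
          exact (Submodule.Quotient.mk_eq_zero _).2 ⟨a, rfl⟩
        · ext y
          simp only [PComodAux.comp_fbH, PComodAux.quotHom, PComodAux.zeroHom,
            LinearMap.coe_comp, Function.comp_apply, LinearMap.zero_apply]
          exact (Submodule.Quotient.mk_eq_zero _).2 ⟨y, rfl⟩
      have hq0 : PComodAux.quotHom B N M h1 h2 =
          PComodAux.zeroHom B (PComodAux.quotObj B N M h1 h2) :=
        hu.left_cancellation _ _ heq
      intro b
      have hb := congrArg (fun g => g.f b) hq0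
      simp only [PComodAux.quotHom, PComodAux.zeroHom, LinearMap.zero_apply] at hb
      exact (Submodule.Quotient.mk_eq_zero N).1 hb
    · exact PComodAux.epi_of_surjective u
  refine ⟨epi_iff, ?_⟩
  intro A
  refine ⟨{p : Submodule k A.X × Submodule k A.XbH //
      (∀ x ∈ p.1, ∀ hh : H, A.π (x ⊗ₜ hh) ∈ p.2) ∧ ∀ x ∈ p.1, A.ρ x ∈ p.2},
    fun i => PComodAux.quotObj A i.1.1 i.1.2 i.2.1 i.2.2,
    fun i => PComodAux.quotHom A i.1.1 i.1.2 i.2.1 i.2.2, ?_, ?_⟩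
  · intro i
    exact PComodAux.epi_of_surjective _ (Submodule.mkQ_surjective _)
  · intro B u hu
    have hf : Function.Surjective u.f := (epi_iff A B u).1 hu
    have hbH : Function.Surjective u.fbH := PComodAux.fbH_surjective u hf
    have h1 : ∀ x ∈ LinearMap.ker u.f, ∀ hh : H, A.π (x ⊗ₜ hh) ∈ LinearMap.ker u.fbH := by
      intro x hx hh
      have := congrArg (fun g => g (x ⊗ₜ[k] hh)) u.comm1
      simp only [LinearMap.coe_comp, Function.comp_apply, TensorProduct.map_tmul,
        LinearMap.id_coe, id_eq] at this
      rw [LinearMap.mem_ker] at hx ⊢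
      rw [this, hx]
      simp
    have h2 : ∀ x ∈ LinearMap.ker u.f, A.ρ x ∈ LinearMap.ker u.fbH := by
      intro x hx
      have := congrArg (fun g => g x) u.comm2
      simp only [LinearMap.coe_comp, Function.comp_apply] at this
      rw [LinearMap.mem_ker] at hx ⊢
      rw [this, hx]
      simp
    set i : {p : Submodule k A.X × Submodule k A.XbH //
        (∀ x ∈ p.1, ∀ hh : H, A.π (x ⊗ₜ hh) ∈ p.2) ∧ ∀ x ∈ p.1, A.ρ x ∈ p.2} :=
      ⟨(LinearMap.ker u.f, LinearMap.ker u.fbH), h1, h2⟩ with hi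
    set N := LinearMap.ker u.f
    set M := LinearMap.ker u.fbH
    have wcomm1 : M.liftQ u.fbH le_rfl ∘ₗ (PComodAux.quotObj A N M h1 h2).π =
        B.π ∘ₗ TensorProduct.map (N.liftQ u.f le_rfl) LinearMap.id := by
      apply TensorProduct.ext'
      intro xq hh
      obtain ⟨x, rfl⟩ := N.mkQ_surjective xq
      have hx := congrArg (fun g => g (x ⊗ₜ[k] hh)) u.comm1
      simp only [LinearMap.coe_comp, Function.comp_apply, TensorProduct.map_tmul,
        LinearMap.id_coe, id_eq] at hx ⊢
      exact hx
    have wcomm2 : M.liftQ u.fbH le_rfl ∘ₗ (PComodAux.quotObj A N M h1 h2).ρ =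
        B.ρ ∘ₗ N.liftQ u.f le_rfl := by
      apply LinearMap.ext
      intro xq
      obtain ⟨x, rfl⟩ := N.mkQ_surjective xq
      have hx := congrArg (fun g => g x) u.comm2
      simp only [LinearMap.coe_comp, Function.comp_apply] at hx ⊢
      exact hx
    set w : PComodAux.quotObj A N M h1 h2 ⟶ B :=
      ⟨N.liftQ u.f le_rfl, M.liftQ u.fbH le_rfl, wcomm1, wcomm2⟩ with hw
    have hwf : Function.Bijective w.f := by
      constructor
      · rw [← LinearMap.ker_eq_bot]
        exact Submodule.ker_liftQ_eq_bot _ _ _ le_rfl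
      · intro b
        obtain ⟨a, rfl⟩ := hf b
        exact ⟨N.mkQ a, N.liftQ_apply u.f a⟩
    have hwbH : Function.Bijective w.fbH := by
      constructor
      · rw [← LinearMap.ker_eq_bot]
        exact Submodule.ker_liftQ_eq_bot _ _ _ le_rfl
      · intro b
        obtain ⟨a, rfl⟩ := hbH b
        exact ⟨M.mkQ a, M.liftQ_apply u.fbH a⟩
    refine ⟨i, PComodAux.isoOfBijective w hwf hwbH, ?_⟩
    apply PComodHom.ext
    · exact Submodule.liftQ_mkQ _ _ _
    · exact Submodule.liftQ_mkQ _ _ _
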